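/- arXiv:1302.7099 — 2 statements merged into one kernel-verified Lean document; each statement's English description precedes it below -/
import Mathlib

section
/- Assume the standing assumptions. If (p₁ − p₀)/√p₀ · n²/N → ∞ as N → ∞, then the total degree test is asymptotically powerful: there exists a sequence of thresholds t_N ∈ ℝ such that the tests T_N = 1{W ≥ t_N}, where W := Σ_{1≤i<j≤N} W_{ij} is the total number of edges, satisfy γ_N(T_N) → 0. -/
open MeasureTheory ProbabilityTheory Filter Real Topology Asymptotics

noncomputable section

/-- The set of ordered pairs `(i,j)` with `i < j` in `Fin N`: the potential edges. -/
abbrev EdgePairs (N : ℕ) := {ij : Fin N × Fin N // ij.1 < ij.2}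

/-- The sample space: an assignment of presence/absence to each potential edge. -/
abbrev GraphSpace (N : ℕ) := EdgePairs N → Bool

/-- Bernoulli measure on `Bool` with parameter `p` (clamped to `[0,1]`). -/
noncomputable def bern (p : ℝ) : Measure Bool :=
  (PMF.bernoulli (min (Real.toNNReal p) 1) (min_le_right _ _)).toMeasure

/-- The random graph measure in which each potential edge `(i,j)`, `i<j`, is present
independently with probability `q i j`. -/
noncomputable def graphMeasure (N : ℕ) (q : Fin N → Fin N → ℝ) : Measure (GraphSpace N) :=
  Measure.pi fun ij => bern (q ij.val.1 ij.val.2)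

/-- The Erdős–Rényi null measure `G(N, p₀)`. -/
noncomputable def nullMeasure (N : ℕ) (p0 : ℝ) : Measure (GraphSpace N) :=
  graphMeasure N fun _ _ => p0

/-- The alternative measure: edges inside `S` appear with probability `pin`,
all other edges with probability `pout`. -/
noncomputable def altMeasure (N : ℕ) (S : Finset (Fin N)) (pout pin : ℝ) :
    Measure (GraphSpace N) :=
  graphMeasure N fun i j => if i ∈ S ∧ j ∈ S then pin else pout

/-- `WS S ω`: number of present edges with both endpoints in `S`. -/
def WS {N : ℕ} (S : Finset (Fin N)) (ω : GraphSpace N) : ℕ :=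
  ∑ ij : EdgePairs N,
    if ij.val.1 ∈ S ∧ ij.val.2 ∈ S ∧ ω ij = true then 1 else 0

/-- Total number of edges. -/
def totalEdges {N : ℕ} (ω : GraphSpace N) : ℕ := WS Finset.univ ω

/-- Indicator (0/1) of the edge between `i` and `j`. -/
def edgeVal {N : ℕ} (ω : GraphSpace N) (i j : Fin N) : ℕ :=
  if h : i < j then (if ω ⟨(i, j), h⟩ then 1 else 0)
  else if h' : j < i then (if ω ⟨(j, i), h'⟩ then 1 else 0)
  else 0

/-- Degree of node `i`. -/
def degree {N : ℕ} (i : Fin N) (ω : GraphSpace N) : ℕ := ∑ j, edgeVal ω i j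

/-- The risk of a test `T` (rejecting when `T ω` holds): type I error under the null
with connection probability `pnull`, plus the worst type II error over communities `S`
of size `nn`, where under the alternative edges inside `S` have probability `pin` and
all other edges probability `pout`. -/
noncomputable def grisk (N nn : ℕ) (pnull pout pin : ℝ) (T : GraphSpace N → Prop) : ℝ :=
  (nullMeasure N pnull {ω | T ω}).toReal +
    ⨆ S : {S : Finset (Fin N) // S.card = nn},
      (altMeasure N S.val pout pin {ω | ¬ T ω}).toReal

/-- Relative entropy (Kullback–Leibler divergence) of `Bern(q)` from `Bern(p)`. -/
noncomputable def H (p q : ℝ) : ℝ :=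
  q * Real.log (q / p) + (1 - q) * Real.log ((1 - q) / (1 - p))


/-! ### Auxiliary lemmas -/
open scoped ENNReal NNReal

section PiBoolAux
variable {ι : Type*} [Fintype ι] [DecidableEq ι] (μs : ι → Measure Bool)
  [∀ i, IsProbabilityMeasure (μs i)]

lemma pi_eval_preimage (e : ι) (A : Set Bool) :
    Measure.pi μs (Function.eval e ⁻¹' A) = μs e A := by
  have h1 : Function.eval e ⁻¹' A
      = Set.pi Set.univ (Function.update (fun _ : ι => (Set.univ : Set Bool)) e A) := by
    ext ω
    simp only [Set.mem_preimage, Set.mem_pi, Set.mem_univ, forall_true_left]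
    constructor
    · intro h i
      rcases eq_or_ne i e with rfl | hne
      · simpa using h
      · simp [Function.update_apply, hne]
    · intro h
      have := h e
      simpa using this
  rw [h1, Measure.pi_pi]
  have h2 : ∀ i, μs i (Function.update (fun _ : ι => (Set.univ : Set Bool)) e A i)
      = if i = e then μs e A else 1 := by
    intro i
    rcases eq_or_ne i e with rfl | hne
    · simp
    · rw [Function.update_of_ne hne, if_neg hne]
      exact measure_univ
  simp_rw [h2]
  simp

lemma pi_eval_preimage_two {e f : ι} (hef : e ≠ f) (A B : Set Bool) :
    Measure.pi μs (Function.eval e ⁻¹' A ∩ Function.eval f ⁻¹' B) = μs e A * μs f B := by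
  set s : ι → Set Bool := Function.update (Function.update (fun _ => Set.univ) e A) f B with hs
  have h1 : Function.eval e ⁻¹' A ∩ Function.eval f ⁻¹' B = Set.pi Set.univ s := by
    ext ω
    simp only [Set.mem_inter_iff, Set.mem_preimage, Set.mem_pi, Set.mem_univ, forall_true_left]
    constructor
    · rintro ⟨hA, hB⟩ i
      rcases eq_or_ne i f with rfl | hif
      · simpa [hs] using hB
      · rcases eq_or_ne i e with rfl | hie
        · simpa [hs, Function.update_apply, hif] using hA
        · simp [hs, Function.update_apply, hif, hie]
    · intro h
      refine ⟨?_, ?_⟩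
      · have := h e
        simpa [hs, Function.update_apply, hef] using this
      · have := h f
        simpa [hs] using this
  rw [h1, Measure.pi_pi]
  have h2 : ∀ i, μs i (s i)
      = Function.update (Function.update (fun _ => (1:ℝ≥0∞)) e (μs e A)) f (μs f B) i := by
    intro i
    rcases eq_or_ne i f with rfl | hif
    · simp [hs]
    · rcases eq_or_ne i e with rfl | hie
      · simp [hs, Function.update_apply, hif, hef.symm]
      · have hsi : s i = Set.univ := by simp [hs, Function.update_apply, hif, hie]
        rw [hsi, Function.update_of_ne hif, Function.update_of_ne hie]
        exact measure_univ
  simp_rw [h2]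
  rw [Finset.prod_update_of_mem (Finset.mem_univ f)]
  rw [Finset.prod_update_of_mem (by simp [hef] : e ∈ Finset.univ \ {f})]
  simp [mul_comm]

lemma indep_comp_eval (g h : Bool → ℝ) {e f : ι} (hef : e ≠ f) :
    IndepFun (fun ω : ι → Bool => g (ω e)) (fun ω : ι → Bool => h (ω f)) (Measure.pi μs) := by
  rw [indepFun_iff_measure_inter_preimage_eq_mul]
  intro s t _ _
  have h1 : (fun ω : ι → Bool => g (ω e)) ⁻¹' s = Function.eval e ⁻¹' (g ⁻¹' s) := rfl
  have h2 : (fun ω : ι → Bool => h (ω f)) ⁻¹' t = Function.eval f ⁻¹' (h ⁻¹' t) := rfl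
  rw [h1, h2, pi_eval_preimage_two μs hef, pi_eval_preimage, pi_eval_preimage]

end PiBoolAux

section MomentsAux
variable {N : ℕ}

instance bern_prob (p : ℝ) : IsProbabilityMeasure (bern p) := by
  unfold bern; infer_instance

instance graphMeasure_prob (q : Fin N → Fin N → ℝ) :
    IsProbabilityMeasure (graphMeasure N q) := by
  unfold graphMeasure; infer_instance

lemma bern_true {p : ℝ} (h1 : p ≤ 1) : bern p {true} = ENNReal.ofReal p := by
  unfold bern
  rw [PMF.toMeasure_apply_singleton _ _ (measurableSet_singleton _)]
  have : min (Real.toNNReal p) 1 = Real.toNNReal p :=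
    min_eq_left (Real.toNNReal_le_one.2 h1)
  simp [PMF.bernoulli_apply, this, ENNReal.ofReal]

/-- the indicator of edge `e`. -/
abbrev Xe (e : EdgePairs N) : GraphSpace N → ℝ := fun ω => if ω e then 1 else 0

def qe {N : ℕ} (q : Fin N → Fin N → ℝ) (e : EdgePairs N) : ℝ := q e.val.1 e.val.2

lemma integral_Xe (q : Fin N → Fin N → ℝ) (hq : ∀ i j, 0 ≤ q i j ∧ q i j ≤ 1)
    (e : EdgePairs N) : ∫ ω, Xe e ω ∂(graphMeasure N q) = qe q e := by
  have hX : (fun ω : GraphSpace N => Xe e ω)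
      = Set.indicator (Function.eval e ⁻¹' ({true} : Set Bool)) (fun _ => (1:ℝ)) := by
    funext ω
    by_cases h : ω e <;> simp [Xe, Set.indicator_apply, Set.mem_preimage, h, Function.eval]
  rw [hX, integral_indicator_const _ (MeasurableSet.of_discrete)]
  have : graphMeasure N q (Function.eval e ⁻¹' ({true} : Set Bool))
      = ENNReal.ofReal (qe q e) := by
    rw [show graphMeasure N q = Measure.pi (fun e : EdgePairs N => bern (qe q e)) from rfl,
      pi_eval_preimage, bern_true (show qe q e ≤ 1 from (hq _ _).2)]
  rw [measureReal_def, this, ENNReal.toReal_ofReal (show (0:ℝ) ≤ qe q e from (hq _ _).1)]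
  simp

lemma variance_Xe (q : Fin N → Fin N → ℝ) (hq : ∀ i j, 0 ≤ q i j ∧ q i j ≤ 1)
    (e : EdgePairs N) :
    variance (Xe e) (graphMeasure N q) = qe q e * (1 - qe q e) := by
  rw [variance_eq_sub MemLp.of_discrete]
  have hsq : (Xe e) ^ 2 = Xe e := by
    funext ω
    by_cases h : ω e <;> simp [Xe, h]
  rw [hsq, integral_Xe q hq e]
  ring

lemma totalEdges_cast (ω : GraphSpace N) :
    (totalEdges ω : ℝ) = ∑ e : EdgePairs N, Xe e ω := by
  unfold totalEdges WS
  push_cast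
  refine Finset.sum_congr rfl fun e _ => ?_
  by_cases h : ω e <;> simp [Xe, h]

lemma integral_W (q : Fin N → Fin N → ℝ) (hq : ∀ i j, 0 ≤ q i j ∧ q i j ≤ 1) :
    ∫ ω, (totalEdges ω : ℝ) ∂(graphMeasure N q) = ∑ e : EdgePairs N, qe q e := by
  simp_rw [totalEdges_cast]
  rw [integral_finset_sum _ (fun e _ => Integrable.of_finite)]
  exact Finset.sum_congr rfl fun e _ => integral_Xe q hq e

lemma variance_W (q : Fin N → Fin N → ℝ) (hq : ∀ i j, 0 ≤ q i j ∧ q i j ≤ 1) :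
    variance (fun ω => (totalEdges ω : ℝ)) (graphMeasure N q)
      = ∑ e : EdgePairs N, qe q e * (1 - qe q e) := by
  have hW : (fun ω : GraphSpace N => (totalEdges ω : ℝ)) = ∑ e : EdgePairs N, Xe e := by
    funext ω
    rw [totalEdges_cast]
    simp
  rw [hW, IndepFun.variance_sum (fun e _ => MemLp.of_discrete)
    (fun e _ f hf hef => by
      exact indep_comp_eval (fun e : EdgePairs N => bern (qe q e))
        (fun b => if b then 1 else 0) (fun b => if b then 1 else 0) hef)]
  exact Finset.sum_congr rfl fun e _ => variance_Xe q hq e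

lemma tail_bound (q : Fin N → Fin N → ℝ) (hq : ∀ i j, 0 ≤ q i j ∧ q i j ≤ 1)
    {c : ℝ} (hc : 0 < c) :
    (graphMeasure N q
        {ω | c ≤ |(totalEdges ω : ℝ) - ∑ e : EdgePairs N, qe q e|}).toReal
      ≤ (∑ e : EdgePairs N, qe q e) / c ^ 2 := by
  have hm := integral_W q hq
  have hcheb := meas_ge_le_variance_div_sq (μ := graphMeasure N q)
    (X := fun ω => (totalEdges ω : ℝ)) MemLp.of_discrete hc
  rw [hm] at hcheb
  have h1 : (graphMeasure N q
        {ω | c ≤ |(totalEdges ω : ℝ) - ∑ e : EdgePairs N, qe q e|}).toReal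
      ≤ variance (fun ω => (totalEdges ω : ℝ)) (graphMeasure N q) / c ^ 2 :=
    ENNReal.toReal_le_of_le_ofReal
      (div_nonneg (variance_nonneg _ _) (sq_nonneg c)) hcheb
  refine h1.trans ?_
  rw [variance_W q hq]
  have hsum : ∑ e : EdgePairs N, qe q e * (1 - qe q e) ≤ ∑ e : EdgePairs N, qe q e :=
    Finset.sum_le_sum fun e _ =>
      by nlinarith [show (0:ℝ) ≤ qe q e from (hq _ _).1, show qe q e ≤ 1 from (hq _ _).2]
  have hc2 : (0:ℝ) < c ^ 2 := by positivity
  exact (div_le_div_iff_of_pos_right hc2).2 hsum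

def insideEdges (S : Finset (Fin N)) : Finset (EdgePairs N) :=
  Finset.univ.filter (fun e : EdgePairs N => e.val.1 ∈ S ∧ e.val.2 ∈ S)

lemma two_mul_card_inside (S : Finset (Fin N)) :
    2 * (insideEdges S).card = S.card * S.card - S.card := by
  classical
  have hA : (insideEdges S).card = (S.offDiag.filter (fun p => p.1 < p.2)).card := by
    refine Finset.card_bij' (fun e _ => e.val)
      (fun p hp => ⟨p, (Finset.mem_filter.1 hp).2⟩) ?_ ?_ ?_ ?_
    · intro e he
      rcases Finset.mem_filter.1 he with ⟨-, h1, h2⟩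
      exact Finset.mem_filter.2 ⟨Finset.mem_offDiag.2 ⟨h1, h2, ne_of_lt e.prop⟩, e.prop⟩
    · intro p hp
      rcases Finset.mem_filter.1 hp with ⟨hod, -⟩
      rcases Finset.mem_offDiag.1 hod with ⟨h1, h2, -⟩
      exact Finset.mem_filter.2 ⟨Finset.mem_univ _, h1, h2⟩
    · intro e he; rfl
    · intro p hp; rfl
  have hB : (S.offDiag.filter (fun p => p.1 < p.2)).card
      = (S.offDiag.filter (fun p => ¬ p.1 < p.2)).card := by
    refine Finset.card_bij' (fun p _ => (p.2, p.1)) (fun p _ => (p.2, p.1)) ?_ ?_ ?_ ?_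
    · intro p hp
      rcases Finset.mem_filter.1 hp with ⟨hod, hlt⟩
      rcases Finset.mem_offDiag.1 hod with ⟨h1, h2, hne⟩
      exact Finset.mem_filter.2 ⟨Finset.mem_offDiag.2 ⟨h2, h1, hne.symm⟩, not_lt_of_gt hlt⟩
    · intro p hp
      rcases Finset.mem_filter.1 hp with ⟨hod, hnlt⟩
      rcases Finset.mem_offDiag.1 hod with ⟨h1, h2, hne⟩
      exact Finset.mem_filter.2 ⟨Finset.mem_offDiag.2 ⟨h2, h1, hne.symm⟩,
        lt_of_le_of_ne (not_lt.1 hnlt) hne.symm⟩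
    · intro p hp; rfl
    · intro p hp; rfl
  have := Finset.card_filter_add_card_filter_not
    (s := S.offDiag) (fun p : Fin N × Fin N => p.1 < p.2)
  rw [Finset.offDiag_card] at this
  omega

lemma card_inside_real (S : Finset (Fin N)) :
    ((insideEdges S).card : ℝ) = (S.card : ℝ) * ((S.card : ℝ) - 1) / 2 := by
  have h := two_mul_card_inside S
  have hle : S.card ≤ S.card * S.card := by
    rcases Nat.eq_zero_or_pos S.card with h0 | h0
    · simp [h0]
    · exact Nat.le_mul_of_pos_left _ h0
  have := congrArg (fun k : ℕ => (k : ℝ)) h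
  push_cast [Nat.cast_sub hle] at this
  linarith

lemma card_edgePairs_real :
    ((Fintype.card (EdgePairs N)) : ℝ) = (N : ℝ) * ((N : ℝ) - 1) / 2 := by
  have h := card_inside_real (Finset.univ : Finset (Fin N))
  have huniv : insideEdges (Finset.univ : Finset (Fin N)) = Finset.univ := by
    ext e; simp [insideEdges]
  rw [huniv] at h
  simpa using h

set_option maxHeartbeats 1000000 in
lemma grisk_le (N nn : ℕ) (p0 p1 : ℝ) (h0 : 0 < p0) (h01 : p0 < p1) (h11 : p1 < 1)
    (hnN : nn ≤ N) (hn2 : 2 ≤ nn) :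
    grisk N nn p0 p0 p1 (fun ω =>
      (N:ℝ)*((N:ℝ)-1)/2*p0 + (nn:ℝ)*((nn:ℝ)-1)/2*(p1-p0)/2 ≤ (totalEdges ω : ℝ))
      ≤ 64 * ((N:ℝ)^2 * p0) / ((nn:ℝ)^4 * (p1-p0)^2)
        + 16 * p1 / ((nn:ℝ)^2 * (p1-p0)^2) := by
  classical
  set d := p1 - p0 with hd
  set Mr := (N:ℝ)*((N:ℝ)-1)/2 with hMr
  set Kr := (nn:ℝ)*((nn:ℝ)-1)/2 with hKr
  have hd0 : 0 < d := sub_pos.2 h01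
  have hp10 : 0 < p1 := h0.trans h01
  have hnn2 : (2:ℝ) ≤ (nn:ℝ) := by exact_mod_cast hn2
  have hKrlb : (nn:ℝ)^2/4 ≤ Kr := by rw [hKr]; nlinarith
  have hKr0 : 0 < Kr := lt_of_lt_of_le (by positivity) hKrlb
  have hNn : (nn:ℝ) ≤ (N:ℝ) := by exact_mod_cast hnN
  have hN0 : (0:ℝ) < (N:ℝ) := lt_of_lt_of_le (by norm_num) (hnn2.trans hNn)
  have hnn0 : (0:ℝ) < (nn:ℝ) := lt_of_lt_of_le (by norm_num) hnn2
  have hMrub : Mr ≤ (N:ℝ)^2/2 := by rw [hMr]; nlinarith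
  set c := Kr * d / 2 with hc
  have hc0 : 0 < c := by positivity
  have hc2 : (0:ℝ) < c^2 := by positivity
  -- type I error
  have hq0 : ∀ i j : Fin N, 0 ≤ (fun _ _ : Fin N => p0) i j ∧ (fun _ _ : Fin N => p0) i j ≤ 1 :=
    fun i j => ⟨h0.le, (h01.trans h11).le⟩
  have hm0 : ∑ e : EdgePairs N, qe (fun _ _ => p0) e = Mr * p0 := by
    simp only [qe]
    rw [Finset.sum_const, Finset.card_univ, nsmul_eq_mul, card_edgePairs_real]
  have hsub1 : {ω : GraphSpace N | Mr*p0 + Kr*d/2 ≤ (totalEdges ω:ℝ)}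
      ⊆ {ω : GraphSpace N |
          c ≤ |(totalEdges ω:ℝ) - ∑ e : EdgePairs N, qe (fun _ _ => p0) e|} := by
    intro ω hω
    simp only [Set.mem_setOf_eq] at hω ⊢
    rw [hm0]
    have h' : c ≤ (totalEdges ω:ℝ) - Mr*p0 := by rw [hc]; linarith
    exact h'.trans (le_abs_self _)
  have h1 : (nullMeasure N p0
        {ω : GraphSpace N | Mr*p0 + Kr*d/2 ≤ (totalEdges ω:ℝ)}).toReal ≤ Mr*p0/c^2 := by
    have hmono : (nullMeasure N p0 {ω : GraphSpace N | Mr*p0 + Kr*d/2 ≤ (totalEdges ω:ℝ)}).toReal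
        ≤ (graphMeasure N (fun _ _ => p0) {ω : GraphSpace N |
            c ≤ |(totalEdges ω:ℝ) - ∑ e : EdgePairs N, qe (fun _ _ => p0) e|}).toReal :=
      ENNReal.toReal_mono (measure_ne_top _ _) (measure_mono hsub1)
    refine hmono.trans ((tail_bound _ hq0 hc0).trans ?_)
    rw [hm0]
  -- type II error
  have h2 : ∀ S : Finset (Fin N), S.card = nn →
      (altMeasure N S p0 p1
        {ω : GraphSpace N | ¬ (Mr*p0 + Kr*d/2 ≤ (totalEdges ω:ℝ))}).toReal
      ≤ (Mr*p0 + Kr*p1)/c^2 := by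
    intro S hS
    set qS : Fin N → Fin N → ℝ := fun i j => if i ∈ S ∧ j ∈ S then p1 else p0 with hqSdef
    have hqS : ∀ i j, 0 ≤ qS i j ∧ qS i j ≤ 1 := by
      intro i j
      simp only [hqSdef]
      split_ifs
      · exact ⟨hp10.le, h11.le⟩
      · exact ⟨h0.le, (h01.trans h11).le⟩
    have hmS : ∑ e : EdgePairs N, qe qS e = Mr * p0 + Kr * d := by
      have hterm : ∀ e : EdgePairs N,
          qe qS e = p0 + (if e.val.1 ∈ S ∧ e.val.2 ∈ S then d else 0) := by
        intro e
        simp only [qe, hqSdef]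
        split_ifs
        · rw [hd]; ring
        · ring
      rw [Finset.sum_congr rfl (fun e _ => hterm e), Finset.sum_add_distrib,
        Finset.sum_const, Finset.card_univ, nsmul_eq_mul, card_edgePairs_real,
        ← Finset.sum_filter]
      have : (Finset.univ.filter (fun e : EdgePairs N => e.val.1 ∈ S ∧ e.val.2 ∈ S))
          = insideEdges S := rfl
      rw [this, Finset.sum_const, nsmul_eq_mul, card_inside_real, hS, hMr]
    have hsub2 : {ω : GraphSpace N | ¬ (Mr*p0 + Kr*d/2 ≤ (totalEdges ω:ℝ))}
        ⊆ {ω : GraphSpace N |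
            c ≤ |(totalEdges ω:ℝ) - ∑ e : EdgePairs N, qe qS e|} := by
      intro ω hω
      simp only [Set.mem_setOf_eq, not_le] at hω ⊢
      rw [hmS]
      have h' : c ≤ (Mr * p0 + Kr * d) - (totalEdges ω:ℝ) := by rw [hc]; linarith
      calc c ≤ (Mr * p0 + Kr * d) - (totalEdges ω:ℝ) := h'
        _ ≤ |(Mr * p0 + Kr * d) - (totalEdges ω:ℝ)| := le_abs_self _
        _ = |(totalEdges ω:ℝ) - (Mr * p0 + Kr * d)| := abs_sub_comm _ _
    have hmono : (altMeasure N S p0 p1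
          {ω : GraphSpace N | ¬ (Mr*p0 + Kr*d/2 ≤ (totalEdges ω:ℝ))}).toReal
        ≤ (graphMeasure N qS {ω : GraphSpace N |
            c ≤ |(totalEdges ω:ℝ) - ∑ e : EdgePairs N, qe qS e|}).toReal :=
      ENNReal.toReal_mono (measure_ne_top _ _) (measure_mono hsub2)
    refine hmono.trans ((tail_bound _ hqS hc0).trans ?_)
    rw [hmS]
    have hnum : Mr * p0 + Kr * d ≤ Mr * p0 + Kr * p1 := by
      have : d ≤ p1 := by rw [hd]; linarith
      nlinarith
    exact (div_le_div_iff_of_pos_right hc2).2 hnum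
  -- assemble
  haveI hne : Nonempty {S : Finset (Fin N) // S.card = nn} := by
    obtain ⟨S, -, hS⟩ := Finset.exists_subset_card_eq (s := (Finset.univ : Finset (Fin N))) (n := nn)
      (by simpa using hnN)
    exact ⟨⟨S, hS⟩⟩
  have hsup : (⨆ S : {S : Finset (Fin N) // S.card = nn},
      (altMeasure N S.val p0 p1
        {ω : GraphSpace N | ¬ (Mr*p0 + Kr*d/2 ≤ (totalEdges ω:ℝ))}).toReal)
      ≤ (Mr*p0 + Kr*p1)/c^2 :=
    ciSup_le fun S => h2 S.val S.prop
  have hKr2 : ((nn:ℝ)^2/4)^2 ≤ Kr^2 := by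
    have := pow_le_pow_left₀ (by positivity : (0:ℝ) ≤ (nn:ℝ)^2/4) hKrlb 2
    simpa using this
  have hA1 : Mr*p0/c^2 ≤ 32*((N:ℝ)^2*p0)/((nn:ℝ)^4*d^2) := by
    rw [div_le_div_iff₀ hc2 (by positivity)]
    have hcval : c^2 = Kr^2*d^2/4 := by rw [hc]; ring
    rw [hcval]
    have e1 : ((nn:ℝ)^2/4)^2 * ((N:ℝ)^2*p0*d^2) ≤ Kr^2 * ((N:ℝ)^2*p0*d^2) :=
      mul_le_mul_of_nonneg_right hKr2 (by positivity)
    have e2 : Mr * (p0*(nn:ℝ)^4*d^2) ≤ (N:ℝ)^2/2 * (p0*(nn:ℝ)^4*d^2) :=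
      mul_le_mul_of_nonneg_right hMrub (by positivity)
    linarith [e1, e2]
  have hA2 : Kr*p1/c^2 ≤ 16*p1/((nn:ℝ)^2*d^2) := by
    rw [div_le_div_iff₀ hc2 (by positivity)]
    have hcval : c^2 = Kr^2*d^2/4 := by rw [hc]; ring
    rw [hcval]
    have e1 : (nn:ℝ)^2/4 * (Kr*p1*d^2) ≤ Kr * (Kr*p1*d^2) :=
      mul_le_mul_of_nonneg_right hKrlb (by positivity)
    linarith [e1]
  have hsplit : (Mr*p0 + Kr*p1)/c^2 = Mr*p0/c^2 + Kr*p1/c^2 := by ring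
  refine le_trans (add_le_add h1 hsup) ?_
  rw [hsplit]
  refine le_trans (add_le_add hA1 (add_le_add hA1 hA2)) (le_of_eq ?_)
  ring

end MomentsAux

/-- if `(p₁ − p₀)/√p₀ · n²/N → ∞`, the total degree test is asymptotically
powerful: for suitable thresholds `t_N`, the tests `1{W ≥ t_N}` have risk tending to 0. -/
theorem total_degree_test_powerful
    (n : ℕ → ℕ) (p0 p1 : ℕ → ℝ)
    (hn : ∀ N, 1 ≤ n N ∧ n N ≤ N)
    (hp : ∀ N, 0 < p0 N ∧ p0 N < p1 N ∧ p1 N < 1)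
    (hp0away : ∃ c < (1 : ℝ), ∀ N, p0 N ≤ c)
    (hratio : Tendsto (fun N : ℕ => (n N : ℝ) / N) atTop (𝓝 0))
    (hN2p0 : Tendsto (fun N : ℕ => (N : ℝ) ^ 2 * p0 N) atTop atTop)
    (hninf : Tendsto n atTop atTop)
    (hn2p1 : Tendsto (fun N : ℕ => (n N : ℝ) ^ 2 * p1 N) atTop atTop)
    (hsignal : Tendsto
      (fun N : ℕ => (p1 N - p0 N) / Real.sqrt (p0 N) * ((n N : ℝ) ^ 2 / N)) atTop atTop) :
    ∃ t : ℕ → ℝ,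
      Tendsto (fun N : ℕ => grisk N (n N) (p0 N) (p0 N) (p1 N)
        (fun ω => t N ≤ (totalEdges ω : ℝ))) atTop (𝓝 0) := by
  classical
  refine ⟨fun N => (N:ℝ)*((N:ℝ)-1)/2*(p0 N) + (n N:ℝ)*((n N:ℝ)-1)/2*(p1 N - p0 N)/2, ?_⟩
  have hp0 : ∀ N, 0 < p0 N := fun N => (hp N).1
  have hp1 : ∀ N, 0 < p1 N := fun N => (hp N).1.trans (hp N).2.1
  have hd0 : ∀ N, 0 < p1 N - p0 N := fun N => sub_pos.2 (hp N).2.1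
  have hN1 : ∀ N : ℕ, 1 ≤ N := fun N => le_trans (hn N).1 (hn N).2
  have hNpos : ∀ N : ℕ, (0:ℝ) < (N:ℝ) := fun N => by exact_mod_cast hN1 N
  have hnpos : ∀ N : ℕ, (0:ℝ) < (n N : ℝ) := fun N => by exact_mod_cast (hn N).1
  have hnN : ∀ N : ℕ, (n N : ℝ) ≤ (N : ℝ) := fun N => by exact_mod_cast (hn N).2
  -- the squared signal tends to infinity
  have hsig2 : Tendsto (fun N : ℕ =>
      ((p1 N - p0 N) / Real.sqrt (p0 N) * ((n N : ℝ) ^ 2 / N))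
        * ((p1 N - p0 N) / Real.sqrt (p0 N) * ((n N : ℝ) ^ 2 / N))) atTop atTop :=
    hsignal.atTop_mul_atTop₀ hsignal
  -- first term of the bound tends to 0
  have key1 : ∀ N : ℕ, 64 * ((N:ℝ)^2 * p0 N) / ((n N:ℝ)^4 * (p1 N - p0 N)^2)
      = 64 * (((p1 N - p0 N) / Real.sqrt (p0 N) * ((n N : ℝ) ^ 2 / N))
        * ((p1 N - p0 N) / Real.sqrt (p0 N) * ((n N : ℝ) ^ 2 / N)))⁻¹ := by
    intro N
    have hs : Real.sqrt (p0 N) * Real.sqrt (p0 N) = p0 N := Real.mul_self_sqrt (hp0 N).le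
    have hrw : ((p1 N - p0 N) / Real.sqrt (p0 N) * ((n N : ℝ) ^ 2 / N))
        * ((p1 N - p0 N) / Real.sqrt (p0 N) * ((n N : ℝ) ^ 2 / N))
        = ((p1 N - p0 N)*(p1 N - p0 N))
            / (Real.sqrt (p0 N) * Real.sqrt (p0 N))
            * (((n N:ℝ)^2*(n N:ℝ)^2) / ((N:ℝ)*(N:ℝ))) := by ring
    rw [hrw, hs, div_mul_div_comm, inv_div, ← mul_div_assoc]
    have hb1 : (0:ℝ) < (n N:ℝ)^4 * (p1 N - p0 N)^2 :=
      mul_pos (pow_pos (hnpos N) 4) (pow_pos (hd0 N) 2)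
    have hb2 : (0:ℝ) < (p1 N - p0 N) * (p1 N - p0 N) * ((n N:ℝ)^2 * (n N:ℝ)^2) :=
      mul_pos (mul_pos (hd0 N) (hd0 N)) (mul_pos (pow_pos (hnpos N) 2) (pow_pos (hnpos N) 2))
    rw [div_eq_div_iff hb1.ne' hb2.ne']
    ring
  have hterm1 : Tendsto (fun N : ℕ =>
      64 * ((N:ℝ)^2 * p0 N) / ((n N:ℝ)^4 * (p1 N - p0 N)^2)) atTop (𝓝 0) := by
    have := hsig2.inv_tendsto_atTop.const_mul (64:ℝ)
    rw [mul_zero] at this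
    exact this.congr fun N => (key1 N).symm
  -- second term of the bound tends to 0
  have hA : Tendsto (fun N : ℕ =>
      (n N:ℝ)^2 * (p1 N - p0 N)^2 / p0 N) atTop atTop := by
    refine tendsto_atTop_mono (fun N => ?_) hsig2
    have hs : Real.sqrt (p0 N) * Real.sqrt (p0 N) = p0 N := Real.mul_self_sqrt (hp0 N).le
    have hrw : ((p1 N - p0 N) / Real.sqrt (p0 N) * ((n N : ℝ) ^ 2 / N))
        * ((p1 N - p0 N) / Real.sqrt (p0 N) * ((n N : ℝ) ^ 2 / N))
        = ((p1 N - p0 N)^2 / (Real.sqrt (p0 N) * Real.sqrt (p0 N)))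
            * ((n N:ℝ)^2/(N:ℝ))^2 := by ring
    rw [hrw, hs]
    have h2 : ((n N:ℝ)^2/(N:ℝ))^2 ≤ (n N:ℝ)^2 := by
      rw [div_pow, div_le_iff₀ (pow_pos (hNpos N) 2)]
      have hle : (n N:ℝ)^2 ≤ (N:ℝ)^2 := by nlinarith [hnpos N, hnN N]
      nlinarith [sq_nonneg ((n N : ℝ))]
    calc ((p1 N - p0 N)^2 / p0 N) * ((n N:ℝ)^2/(N:ℝ))^2
        ≤ ((p1 N - p0 N)^2 / p0 N) * (n N:ℝ)^2 :=
          mul_le_mul_of_nonneg_left h2 (div_nonneg (sq_nonneg _) (hp0 N).le)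
      _ = (n N:ℝ)^2 * (p1 N - p0 N)^2 / p0 N := by ring
  have hA2 : Tendsto (fun N : ℕ =>
      (n N:ℝ)^2 * (p1 N - p0 N)^2 / p0 N / 2) atTop atTop :=
    hA.atTop_div_const (by norm_num)
  have hC4 : Tendsto (fun N : ℕ => (n N:ℝ)^2 * p1 N / 4) atTop atTop :=
    hn2p1.atTop_div_const (by norm_num)
  have hmin : Tendsto (fun N : ℕ =>
      min ((n N:ℝ)^2 * (p1 N - p0 N)^2 / p0 N / 2) ((n N:ℝ)^2 * p1 N / 4)) atTop atTop := by
    rw [tendsto_atTop] at hA2 hC4 ⊢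
    intro b
    filter_upwards [hA2 b, hC4 b] with N h1 h2
    exact le_min h1 h2
  have hB : Tendsto (fun N : ℕ =>
      (n N:ℝ)^2 * (p1 N - p0 N)^2 / p1 N) atTop atTop := by
    refine tendsto_atTop_mono (fun N => ?_) hmin
    rcases le_or_gt (p1 N - p0 N) (p0 N) with hcase | hcase
    · refine le_trans (min_le_left _ _) ?_
      rw [div_div]
      have hnum : (0:ℝ) ≤ (n N:ℝ)^2 * (p1 N - p0 N)^2 := by positivity
      exact div_le_div_of_nonneg_left hnum (hp1 N) (by linarith)
    · refine le_trans (min_le_right _ _) ?_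
      rw [div_le_div_iff₀ (by norm_num) (hp1 N)]
      have hq : p1 N ^ 2 ≤ 4 * (p1 N - p0 N)^2 := by nlinarith [hp1 N, hp0 N, hcase]
      nlinarith [mul_le_mul_of_nonneg_left hq (sq_nonneg ((n N : ℝ)))]
  have key2 : ∀ N : ℕ, 16 * p1 N / ((n N:ℝ)^2 * (p1 N - p0 N)^2)
      = 16 * ((n N:ℝ)^2 * (p1 N - p0 N)^2 / p1 N)⁻¹ := by
    intro N
    rw [inv_div]
    ring
  have hterm2 : Tendsto (fun N : ℕ =>
      16 * p1 N / ((n N:ℝ)^2 * (p1 N - p0 N)^2)) atTop (𝓝 0) := by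
    have := hB.inv_tendsto_atTop.const_mul (16:ℝ)
    rw [mul_zero] at this
    exact this.congr fun N => (key2 N).symm
  have hg0 : Tendsto (fun N : ℕ =>
      64 * ((N:ℝ)^2 * p0 N) / ((n N:ℝ)^4 * (p1 N - p0 N)^2)
        + 16 * p1 N / ((n N:ℝ)^2 * (p1 N - p0 N)^2)) atTop (𝓝 0) := by
    have := hterm1.add hterm2
    rwa [add_zero] at this
  refine squeeze_zero' (Eventually.of_forall fun N => ?_) ?_ hg0
  · exact add_nonneg ENNReal.toReal_nonneg (Real.iSup_nonneg fun S => ENNReal.toReal_nonneg)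
  · filter_upwards [hninf.eventually_ge_atTop 2] with N h2
    exact grisk_le N (n N) (p0 N) (p1 N) (hp N).1 (hp N).2.1 (hp N).2.2 (hn N).2 h2
end
end

section
/- Let 0 < p' ≤ p₁ < 1 and t ∈ [0,1], and set p := p' + t(p₁ − p'). Then H_{p'}(p₁) − H_p(p₁) ≤ t · (p₁ − p')² / (p'(1 − p')). -/
open Real

noncomputable section

/-- for `0 < p' ≤ p₁ < 1`, `t ∈ [0,1]` and `p = p' + t(p₁ − p')`,
`H_{p'}(p₁) − H_p(p₁) ≤ t (p₁ − p')² / (p'(1 − p'))`. -/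
theorem entropy_shift_bound (p' p1 t p : ℝ)
    (hp' : 0 < p') (hp'p1 : p' ≤ p1) (hp1 : p1 < 1)
    (ht : t ∈ Set.Icc (0 : ℝ) 1)
    (hpdef : p = p' + t * (p1 - p')) :
    H p' p1 - H p p1 ≤ t * (p1 - p') ^ 2 / (p' * (1 - p')) := by
  obtain ⟨ht0, ht1⟩ := ht
  have hp1pos : 0 < p1 := lt_of_lt_of_le hp' hp'p1
  have h1p' : 0 < 1 - p' := by nlinarith
  have h1p1 : 0 < 1 - p1 := by linarith
  have hppos : 0 < p := by nlinarith
  have hple : p ≤ p1 := by nlinarith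
  have hpge : p' ≤ p := by nlinarith
  have h1p : 0 < 1 - p := by linarith
  have key : H p' p1 - H p p1
      = p1 * Real.log (p / p') + (1 - p1) * Real.log ((1 - p) / (1 - p')) := by
    unfold H
    rw [Real.log_div hp1pos.ne' hp'.ne', Real.log_div hp1pos.ne' hppos.ne',
      Real.log_div h1p1.ne' h1p'.ne', Real.log_div h1p1.ne' h1p.ne',
      Real.log_div hppos.ne' hp'.ne', Real.log_div h1p.ne' h1p'.ne']
    ring
  have l1 : Real.log (p / p') ≤ (p - p') / p' := by
    have h := Real.log_le_sub_one_of_pos (div_pos hppos hp')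
    have : p / p' - 1 = (p - p') / p' := by field_simp
    linarith [this ▸ h]
  have l2 : Real.log ((1 - p) / (1 - p')) ≤ (p' - p) / (1 - p') := by
    have h := Real.log_le_sub_one_of_pos (div_pos h1p h1p')
    have : (1 - p) / (1 - p') - 1 = (p' - p) / (1 - p') := by field_simp; ring
    linarith [this ▸ h]
  have b1 : p1 * Real.log (p / p') ≤ p1 * ((p - p') / p') :=
    mul_le_mul_of_nonneg_left l1 hp1pos.le
  have b2 : (1 - p1) * Real.log ((1 - p) / (1 - p')) ≤ (1 - p1) * ((p' - p) / (1 - p')) :=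
    mul_le_mul_of_nonneg_left l2 h1p1.le
  have hfin : p1 * ((p - p') / p') + (1 - p1) * ((p' - p) / (1 - p'))
      = t * (p1 - p') ^ 2 / (p' * (1 - p')) := by
    subst hpdef
    field_simp
    ring
  linarith [key ▸ (by linarith : p1 * Real.log (p / p') + (1 - p1) * Real.log ((1 - p) / (1 - p')) ≤ t * (p1 - p') ^ 2 / (p' * (1 - p')))]
end
end
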